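/- There exists a constant C > 0 such that for every n ≥ 2 and every subset A ⊆ [n], there exist T ≤ C·log₂(n) and a linear AR hypothesis h ∈ ℋ^Lin such that h^{(T)}(x) = χ_A(x) for all x ∈ {0,1}^n. That is, the class 𝒫_n of all parity functions on {0,1}^n can be computed by ℋ^Lin with length complexity O(log n). -/

import Mathlib

/- STATEMENT 5: The class `𝒫_n` of all parity functions on `{0,1}^n` can be computed
by linear AR hypotheses with length complexity `O(log n)`. -/

/-- The embedding of the token alphabet `{0,1}` as the reals `0, 1`. -/
def bEmb (b : Bool) : ℝ := if b then 1 else 0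

/-- A linear AR hypothesis `h ∈ ℋ^Lin`: for each step `t` (`0`-indexed, so the context
has `n + t` coordinates) and each token `d ∈ {0,1}`, a weight vector on the `n` input
coordinates (`Wx`) and on the `t` previously generated tokens (`Wz`). -/
structure LinAR (n : ℕ) where
  Wx : ℕ → Bool → Fin n → ℝ
  Wz : (t : ℕ) → Bool → Fin t → ℝ

/-- The score `⟨W_{t,d}, (x, z)⟩` of token `d` at step `t` on context `(x, z)`. -/
def LinAR.score {n : ℕ} (h : LinAR n) (t : ℕ) (d : Bool) (x : Fin n → Bool)
    (z : Fin t → Bool) : ℝ :=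
  (∑ i, h.Wx t d i * bEmb (x i)) + ∑ j, h.Wz t d j * bEmb (z j)

/-- The output of the linear AR hypothesis on context `(x, z)`:
`argmax_{d ∈ {0,1}} ⟨W_{t,d}, (x,z)⟩`, ties broken toward `0`. -/
noncomputable def LinAR.step {n : ℕ} (h : LinAR n) (t : ℕ) (x : Fin n → Bool)
    (z : Fin t → Bool) : Bool :=
  decide (h.score t false x z < h.score t true x z)

/-- The rollout of the linear AR hypothesis: `h.rollout x t = h^{(t+1)}(x)`, i.e.
`h^{(1)}(x) = h.rollout x 0` and `h^{(t)}(x) = h(x, (h^{(1)}(x), …, h^{(t-1)}(x)))`. -/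
noncomputable def LinAR.rollout {n : ℕ} (h : LinAR n) (x : Fin n → Bool) (t : ℕ) : Bool :=
  h.step t x fun s : Fin t => h.rollout x s.val
  termination_by t
  decreasing_by exact s.isLt

/-- The parity function `χ_A(x) = Σ_{i ∈ A} x_i mod 2` over the subset `A ⊆ [n]`. -/
def parityFn {n : ℕ} (A : Finset (Fin n)) (x : Fin n → Bool) : Bool :=
  decide ((∑ i ∈ A, (x i).toNat) % 2 = 1)

/-! Auxiliary lemmas -/

lemma bEmb_eq (b : Bool) : bEmb b = (b.toNat : ℝ) := by cases b <;> simp [bEmb]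

lemma bEmb_decide (P : Prop) [Decidable P] : bEmb (decide P) = if P then 1 else 0 := by
  by_cases h : P <;> simp [h, bEmb]

lemma sum_x (n : ℕ) (A : Finset (Fin n)) (c : ℝ) (x : Fin n → Bool) :
    ∑ i, (if i ∈ A then c else 0) * bEmb (x i) = c * ((∑ i ∈ A, (x i).toNat : ℕ) : ℝ) := by
  push_cast [Finset.mul_sum]
  have : ∀ i, (if i ∈ A then c else 0) * bEmb (x i) = if i ∈ A then c * bEmb (x i) else 0 := by
    intro i; split <;> simp
  simp_rw [this]
  rw [Finset.sum_ite_mem, Finset.univ_inter]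
  exact Finset.sum_congr rfl fun i _ => by rw [bEmb_eq]

lemma mod_step (S e : ℕ) :
    S % 2^(e+1) = S % 2^e + 2^e * (if 2^e ≤ S % 2^(e+1) then 1 else 0) := by
  have h1 : S % 2^e = (S % 2^(e+1)) % 2^e :=
    (Nat.mod_mod_of_dvd S (pow_dvd_pow 2 (Nat.le_succ e))).symm
  set m := S % 2^(e+1) with hm
  have hlt : m < 2^(e+1) := Nat.mod_lt _ (Nat.pow_pos (by norm_num))
  have h2 := Nat.div_add_mod m (2^e)
  have h3 : m / 2^e < 2 := Nat.div_lt_of_lt_mul (by rw [pow_succ] at hlt; omega)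
  have h4 : 2^e ≤ m ↔ 1 ≤ m / 2^e := by
    rw [Nat.le_div_iff_mul_le (Nat.pow_pos (by norm_num))]; omega
  rw [h1]
  split <;> rename_i h
  · have hq : m / 2^e = 1 := by have := h4.mp h; omega
    rw [hq] at h2; omega
  · have hq : m / 2^e = 0 := Nat.div_eq_of_lt (by omega)
    rw [hq] at h2; omega

lemma key_sum (S L : ℕ) (hS : S < 2^L) :
    ∀ t, t ≤ L → ∑ j : Fin t, 2^(L - ((j:ℕ)+1)) *
      (if 2^(L-((j:ℕ)+1)) ≤ S % 2^(L-((j:ℕ)+1)+1) then 1 else 0) = S - S % 2^(L-t) := by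
  intro t
  induction t with
  | zero => simp [Nat.mod_eq_of_lt hS]
  | succ t ih =>
    intro ht
    rw [Fin.sum_univ_castSucc]
    simp only [Fin.coe_castSucc, Fin.val_last]
    rw [ih (by omega)]
    have he : L - t = (L - (t+1)) + 1 := by omega
    have h5 := mod_step S (L - (t+1))
    have he2 : S % 2^(L-(t+1)+1) = S % 2^(L-t) := by rw [← he]
    have hle : S % 2^(L-t) ≤ S := Nat.mod_le _ _
    have hle2 : S % 2^(L-(t+1)) ≤ S := Nat.mod_le _ _
    omega

/-- The AR hypothesis computing parity over `A`. -/
def parH (n L : ℕ) (A : Finset (Fin n)) : LinAR n where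
  Wx t d i := cond d (if i ∈ A then (if t = 0 then 1 else 2) else 0) 0
  Wz t d j := cond d (if (j:ℕ) = 0 then 1 - 2^(L - t + 1) else -2^(L - (j:ℕ) + 1)) 0

lemma parH_score_false (n L : ℕ) (A : Finset (Fin n)) (x : Fin n → Bool) (t : ℕ)
    (z : Fin t → Bool) : (parH n L A).score t false x z = 0 := by
  simp [LinAR.score, parH]

lemma parH_score_true (n L : ℕ) (A : Finset (Fin n)) (x : Fin n → Bool) (t : ℕ)
    (z : Fin t → Bool) :
    (parH n L A).score t true x z =
      (if t = 0 then 1 else 2) * ((∑ i ∈ A, (x i).toNat : ℕ) : ℝ)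
      + ∑ j : Fin t, (if (j:ℕ) = 0 then 1 - (2:ℝ)^(L-t+1) else -2^(L-(j:ℕ)+1)) * bEmb (z j) := by
  unfold LinAR.score parH
  simp only [cond_true]
  congr 1
  exact sum_x n A _ x

lemma parH_rollout (n L : ℕ) (A : Finset (Fin n)) (x : Fin n → Bool)
    (hS : (∑ i ∈ A, (x i).toNat) < 2^L) :
    ∀ t, t ≤ L → (parH n L A).rollout x t =
      if t = 0 then decide (0 < ∑ i ∈ A, (x i).toNat)
      else decide (2^(L-t) ≤ (∑ i ∈ A, (x i).toNat) % 2^(L-t+1)) := by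
  set S := ∑ i ∈ A, (x i).toNat with hSdef
  intro t
  induction t using Nat.strong_induction_on with
  | _ t ih =>
    intro ht
    rw [LinAR.rollout, LinAR.step, parH_score_false, parH_score_true]
    match t with
    | 0 =>
      have h0 : (∑ j : Fin 0, (if (j:ℕ) = 0 then 1 - (2:ℝ)^(L-0+1) else -2^(L-(j:ℕ)+1))
          * bEmb ((parH n L A).rollout x (j:ℕ))) = 0 := by simp
      rw [h0, add_zero]
      norm_num
      rw [hSdef]
      exact_mod_cast Iff.rfl
    | (t + 1) =>
      have hz : ∀ j : Fin (t+1), (parH n L A).rollout x (j:ℕ) =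
          if (j:ℕ) = 0 then decide (0 < S)
          else decide (2^(L-(j:ℕ)) ≤ S % 2^(L-(j:ℕ)+1)) := by
        intro j
        exact ih (j:ℕ) j.isLt (by omega)
      simp only [if_neg (Nat.succ_ne_zero t), hz]
      rw [Fin.sum_univ_succ]
      simp only [Fin.val_zero, Fin.val_succ, eq_self_iff_true, if_true, Nat.succ_ne_zero,
        if_false, bEmb_decide]
      have hE : L - (t+1) + 1 = L - t := by omega
      by_cases hS0 : S = 0
      · rw [if_neg (by omega : ¬ 0 < S), mul_zero, ← hSdef, hS0]
        have hp : ∀ e : ℕ, ¬ (2^e ≤ 0 % 2^(e+1)) := by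
          intro e
          simp [Nat.pow_pos]
        simp [hp, Nat.le_zero, pow_eq_zero_iff]
      · have hpos : 0 < S := Nat.pos_of_ne_zero hS0
        rw [if_pos hpos, mul_one]
        have hsum : (∑ j : Fin t, (-(2:ℝ)^(L-((j:ℕ)+1)+1)) *
            (if 2^(L-((j:ℕ)+1)) ≤ S % 2^(L-((j:ℕ)+1)+1) then 1 else 0))
            = -2 * ((S - S % 2^(L-t) : ℕ) : ℝ) := by
          rw [← key_sum S L hS t (by omega)]
          push_cast
          rw [Finset.mul_sum]
          refine Finset.sum_congr rfl fun j _ => ?_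
          rw [pow_succ]
          split <;> ring
        rw [hsum, ← hSdef, decide_eq_decide, hE]
        have hcast : ((S - S % 2^(L-t) : ℕ) : ℝ) = (S : ℝ) - ((S % 2^(L-t) : ℕ) : ℝ) :=
          Nat.cast_sub (Nat.mod_le _ _)
        rw [hcast]
        have h2 : (2:ℝ)^(L-t) = 2 * 2^(L-(t+1)) := by rw [← hE, pow_succ]; ring
        rw [h2]
        set m := S % 2^(L-t) with hm
        constructor
        · intro h
          have h1 : (2*2^(L-(t+1)) : ℝ) < 2*(m:ℝ) + 1 := by linarith
          have h2' : (2*2^(L-(t+1)) : ℕ) < 2*m + 1 := by exact_mod_cast h1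
          omega
        · intro h
          have h1 : (2*2^(L-(t+1)) : ℕ) < 2*m + 1 := by omega
          have h2' : (2*2^(L-(t+1)) : ℝ) < 2*(m:ℝ) + 1 := by exact_mod_cast h1
          linarith

/-- There is a constant `C > 0` such that for every `n ≥ 2` and every
subset `A ⊆ [n]` there exist `T ≤ C · log₂ n` and a linear AR hypothesis `h ∈ ℋ^Lin`
with `h^{(T)}(x) = χ_A(x)` for all `x ∈ {0,1}^n` (here `h^{(T)} = h.rollout · (T-1)`):
`𝒫_n` is computed by `ℋ^Lin` with length complexity `O(log n)`. -/
theorem linAR_computes_parities_log_length :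
    ∃ C : ℕ, 0 < C ∧
      ∀ n : ℕ, 2 ≤ n → ∀ A : Finset (Fin n),
        ∃ T : ℕ, 0 < T ∧ T ≤ C * Nat.log 2 n ∧
          ∃ h : LinAR n, ∀ x : Fin n → Bool, h.rollout x (T - 1) = parityFn A x := by
  refine ⟨3, by norm_num, ?_⟩
  intro n hn A
  set L := Nat.log 2 n + 1 with hL
  have hlog : 1 ≤ Nat.log 2 n := Nat.le_log_of_pow_le (by norm_num) (by simpa using hn)
  refine ⟨L + 1, by omega, by omega, parH n L A, ?_⟩
  intro x
  have hS : (∑ i ∈ A, (x i).toNat) < 2^L := by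
    have h1 : (∑ i ∈ A, (x i).toNat) ≤ ∑ _i ∈ A, 1 :=
      Finset.sum_le_sum fun i _ => Bool.toNat_le _
    have h2 : A.card ≤ n := by
      simpa using Finset.card_le_univ A
    have h3 : n < 2^L := Nat.lt_pow_succ_log_self (by norm_num) n
    simp only [Finset.sum_const, smul_eq_mul, mul_one] at h1
    omega
  have h := parH_rollout n L A x hS L le_rfl
  have hT : L + 1 - 1 = L := by omega
  rw [hT, h, if_neg (by omega : ¬ L = 0), Nat.sub_self]
  rw [parityFn, decide_eq_decide]
  norm_num
  omega
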